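/- Let u_T : ℝⁿ → ℝ be Lipschitz with I_T(u_T) nonempty, and set ũ0 := S_T^- u_T. Then for every Lipschitz function u0 : ℝⁿ → ℝ, the following are equivalent: (1) S_T^+ u0 = u_T; (2) u0(x) ≥ ũ0(x) for all x ∈ ℝⁿ, and u0(x) = ũ0(x) for all x ∈ X_T(u_T). -/

import Mathlib

open scoped RealInnerProductSpace
open Filter Topology

noncomputable section

/-- `n`-dimensional Euclidean space. -/
abbrev Euc (n : ℕ) := EuclideanSpace ℝ (Fin n)

/-- A real-valued function on `ℝⁿ` is Lipschitz (with some constant). -/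
def IsLip {n : ℕ} (f : Euc n → ℝ) : Prop := ∃ K : NNReal, LipschitzWith K f

/-- The Legendre transform `L(q) = sup_p (⟨q,p⟫ - H(p))`. -/
def legendre {n : ℕ} (H : Euc n → ℝ) (q : Euc n) : ℝ :=
  ⨆ p : Euc n, (⟪q, p⟫ - H p)

/-- The forward Hopf–Lax operator `(S_T^+ g)(x) = inf_y [g(y) + T·L((x-y)/T)]`. -/
def Splus {n : ℕ} (T : ℝ) (L : Euc n → ℝ) (g : Euc n → ℝ) (x : Euc n) : ℝ :=
  ⨅ y : Euc n, (g y + T * L (T⁻¹ • (x - y)))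

/-- The backward operator `(S_T^- g)(x) = sup_y [g(y) - T·L((y-x)/T)]`. -/
def Sminus {n : ℕ} (T : ℝ) (L : Euc n → ℝ) (g : Euc n → ℝ) (x : Euc n) : ℝ :=
  ⨆ y : Euc n, (g y - T * L (T⁻¹ • (y - x)))

/-- The Hessian of `H` is positive definite at every point. -/
def PosDefHessian {n : ℕ} (H : Euc n → ℝ) : Prop :=
  ∀ p v : Euc n, v ≠ 0 → 0 < iteratedFDeriv ℝ 2 H p ![v, v]

/-- `H` is superlinear: `H(p)/‖p‖ → +∞` as `‖p‖ → +∞`. -/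
def Superlinear {n : ℕ} (H : Euc n → ℝ) : Prop :=
  Tendsto (fun p : Euc n => H p / ‖p‖) (cocompact (Euc n)) atTop

/-- The set `X_T(u_T) = { z - T·∇H(∇u_T(z)) : u_T differentiable at z }`. -/
def XT {n : ℕ} (T : ℝ) (H : Euc n → ℝ) (uT : Euc n → ℝ) : Set (Euc n) :=
  {x | ∃ z : Euc n, DifferentiableAt ℝ uT z ∧ x = z - T • gradient H (gradient uT z)}

namespace Aux

variable {n : ℕ} {T : ℝ} {H : Euc n → ℝ} {K : NNReal} {L g : Euc n → ℝ}



/-- Superlinearity gives an affine lower bound with arbitrary slope. -/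
lemma superlinear_bound (hHc : Continuous H) (hs : Superlinear H) (M : ℝ) :
    ∃ C : ℝ, ∀ p : Euc n, M * ‖p‖ - C ≤ H p := by
  have h1 : ∀ᶠ p in cocompact (Euc n), max M 0 ≤ H p / ‖p‖ := hs.eventually_ge_atTop _
  rw [Filter.eventually_iff, Filter.mem_cocompact] at h1
  obtain ⟨K, hK, hK2⟩ := h1
  obtain ⟨R, hR⟩ := hK.isBounded.subset_closedBall 0
  set R2 : ℝ := max R 0 + 1 with hR2
  obtain ⟨C1, hC1⟩ := (isCompact_closedBall (0 : Euc n) R2).exists_bound_of_continuousOn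
    hHc.continuousOn
  have hC1pos : 0 ≤ C1 := by
    have := hC1 0 (by simp [hR2]; positivity)
    exact (norm_nonneg _).trans this
  refine ⟨C1 + |M| * R2, fun p => ?_⟩
  rcases le_or_gt ‖p‖ R2 with hp | hp
  · have h2 : -C1 ≤ H p := by
      have := hC1 p (by simpa [Metric.mem_closedBall, dist_zero_right] using hp)
      have := abs_le.mp (by simpa [Real.norm_eq_abs] using this)
      linarith [this.1]
    have h3 : M * ‖p‖ ≤ |M| * R2 := by
      calc M * ‖p‖ ≤ |M| * ‖p‖ := by
            apply mul_le_mul_of_nonneg_right (le_abs_self M) (norm_nonneg p)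
        _ ≤ |M| * R2 := by apply mul_le_mul_of_nonneg_left hp (abs_nonneg M)
    linarith
  · have hpK : p ∉ K := by
      intro hmem
      have := hR hmem
      simp only [Metric.mem_closedBall, dist_zero_right] at this
      have : R ≤ max R 0 := le_max_left R 0
      linarith [hR hmem, (by simpa [Metric.mem_closedBall, dist_zero_right] using hR hmem : ‖p‖ ≤ R)]
    have h3 : max M 0 ≤ H p / ‖p‖ := hK2 hpK
    have hpos : (0:ℝ) < ‖p‖ := lt_of_le_of_lt (by positivity) hp
    have h4 : max M 0 * ‖p‖ ≤ H p := (le_div_iff₀ hpos).mp h3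
    have h5 : M * ‖p‖ ≤ max M 0 * ‖p‖ :=
      mul_le_mul_of_nonneg_right (le_max_left M 0) (norm_nonneg p)
    have h6 : 0 ≤ |M| * R2 := by positivity
    linarith

lemma legendre_term_le (hHc : Continuous H) (hs : Superlinear H) (q : Euc n) :
    ∃ C : ℝ, ∀ p : Euc n, ⟪q, p⟫ - H p ≤ C := by
  obtain ⟨C, hC⟩ := superlinear_bound hHc hs ‖q‖
  refine ⟨C, fun p => ?_⟩
  have h1 : ⟪q, p⟫ ≤ ‖q‖ * ‖p‖ := real_inner_le_norm q p
  linarith [hC p]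

lemma legendre_bddAbove (hHc : Continuous H) (hs : Superlinear H) (q : Euc n) :
    BddAbove (Set.range fun p : Euc n => ⟪q, p⟫ - H p) := by
  obtain ⟨C, hC⟩ := legendre_term_le hHc hs q
  exact ⟨C, by rintro x ⟨p, rfl⟩; exact hC p⟩

lemma le_legendre (hHc : Continuous H) (hs : Superlinear H) (q p : Euc n) :
    ⟪q, p⟫ - H p ≤ legendre H q :=
  le_ciSup (legendre_bddAbove hHc hs q) p

/-- The supremum defining the Legendre transform is attained. -/
lemma legendre_exists_max (hHc : Continuous H) (hs : Superlinear H) (q : Euc n) :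
    ∃ p0 : Euc n, (∀ p : Euc n, ⟪q, p⟫ - H p ≤ ⟪q, p0⟫ - H p0) ∧
      legendre H q = ⟪q, p0⟫ - H p0 := by
  obtain ⟨C, hC⟩ := superlinear_bound hHc hs (‖q‖ + 1)
  set f : Euc n → ℝ := fun p => ⟪q, p⟫ - H p with hf
  have hfc : Continuous f := (continuous_const.inner continuous_id).sub hHc
  have hup : ∀ p : Euc n, f p ≤ C - ‖p‖ := by
    intro p
    have h1 : ⟪q, p⟫ ≤ ‖q‖ * ‖p‖ := real_inner_le_norm q p
    have := hC p
    simp only [hf]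
    nlinarith [norm_nonneg p]
  set R : ℝ := max (C + |H 0| + 1) 0 with hRdef
  have hball : (Metric.closedBall (0 : Euc n) R).Nonempty :=
    ⟨0, by simp [hRdef]⟩
  obtain ⟨p0, hp0mem, hp0max⟩ := (isCompact_closedBall (0 : Euc n) R).exists_isMaxOn
    hball hfc.continuousOn
  have hf0 : f 0 = -H 0 := by simp [hf]
  have hglobal : ∀ p : Euc n, f p ≤ f p0 := by
    intro p
    rcases le_or_gt ‖p‖ R with hp | hp
    · exact hp0max (by simpa [Metric.mem_closedBall, dist_zero_right] using hp)
    · have h1 : f p ≤ C - ‖p‖ := hup p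
      have h3 : C + |H 0| + 1 ≤ R := le_max_left _ _
      have h4 : f 0 ≤ f p0 := hp0max (by simp [Metric.mem_closedBall, dist_zero_right, hRdef])
      have h5 : -|H 0| ≤ f 0 := by rw [hf0]; simp [neg_le_neg_iff]; exact le_abs_self (H 0)
      linarith [le_abs_self (H 0)]
  refine ⟨p0, hglobal, le_antisymm (ciSup_le hglobal) (le_ciSup (legendre_bddAbove hHc hs q) p0)⟩



/-- The Legendre transform has arbitrarily steep affine lower bounds. -/
lemma legendre_lb (hHc : Continuous H) (hs : Superlinear H) (M : ℝ) (hM : 0 ≤ M) :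
    ∃ C : ℝ, ∀ q : Euc n, M * ‖q‖ - C ≤ legendre H q := by
  obtain ⟨C0, hC0⟩ := (isCompact_closedBall (0 : Euc n) M).exists_bound_of_continuousOn
    hHc.continuousOn
  refine ⟨C0, fun q => ?_⟩
  rcases eq_or_ne q 0 with rfl | hq
  · have h1 : ⟪(0 : Euc n), (0 : Euc n)⟫ - H 0 ≤ legendre H 0 := le_legendre hHc hs 0 0
    have h2 : ‖H 0‖ ≤ C0 := hC0 0 (by simp [hM])
    have h3 := (abs_le.mp (by simpa [Real.norm_eq_abs] using h2)).2
    simp only [inner_zero_left, zero_sub] at h1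
    simp only [norm_zero, mul_zero, zero_sub]
    linarith
  · have hq0 : (0:ℝ) < ‖q‖ := norm_pos_iff.mpr hq
    set p : Euc n := (M / ‖q‖) • q with hp
    have hnp : ‖p‖ = M := by
      rw [hp, norm_smul, Real.norm_eq_abs, abs_div, abs_of_nonneg hM, abs_of_pos hq0]
      field_simp
    have hip : ⟪q, p⟫ = M * ‖q‖ := by
      rw [hp, real_inner_smul_right, real_inner_self_eq_norm_sq]
      field_simp
    have h2 : ‖H p‖ ≤ C0 := hC0 p (by simp [Metric.mem_closedBall, dist_zero_right, hnp])
    have h3 := (abs_le.mp (by simpa [Real.norm_eq_abs] using h2)).2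
    have h1 := le_legendre hHc hs q p
    rw [hip] at h1
    linarith

lemma legendre_convexOn (hHc : Continuous H) (hs : Superlinear H) :
    ConvexOn ℝ Set.univ (legendre H) := by
  refine ⟨convex_univ, fun q1 _ q2 _ a b ha hb hab => ?_⟩
  obtain ⟨p0, hp0, heq⟩ := legendre_exists_max hHc hs (a • q1 + b • q2)
  rw [heq]
  have h1 : ⟪q1, p0⟫ - H p0 ≤ legendre H q1 := le_legendre hHc hs q1 p0
  have h2 : ⟪q2, p0⟫ - H p0 ≤ legendre H q2 := le_legendre hHc hs q2 p0
  have hin : ⟪a • q1 + b • q2, p0⟫ = a * ⟪q1, p0⟫ + b * ⟪q2, p0⟫ := by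
    rw [inner_add_left, real_inner_smul_left, real_inner_smul_left]
  rw [hin]
  simp only [smul_eq_mul]
  have hmul : a * H p0 + b * H p0 = H p0 := by rw [← add_mul, hab, one_mul]
  linarith [mul_le_mul_of_nonneg_left h1 ha, mul_le_mul_of_nonneg_left h2 hb]

lemma legendre_continuous (hHc : Continuous H) (hs : Superlinear H) :
    Continuous (legendre H) := by
  rw [← continuousOn_univ]
  exact (legendre_convexOn hHc hs).continuousOn isOpen_univ




lemma hessian_nonneg (hHconv : PosDefHessian H) (p v : Euc n) :
    0 ≤ fderiv ℝ (fderiv ℝ H) p v v := by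
  rcases eq_or_ne v 0 with rfl | hv
  · simp
  · have h := hHconv p v hv
    rw [iteratedFDeriv_two_apply] at h
    simpa using h.le

lemma H_grad_ineq (hH : ContDiff ℝ 2 H) (hHconv : PosDefHessian H) (p w : Euc n) :
    H p + fderiv ℝ H p w ≤ H (p + w) := by
  have hHd : Differentiable ℝ H := hH.differentiable (by norm_num)
  have hGd : Differentiable ℝ (fderiv ℝ H) :=
    (hH.fderiv_right (by norm_num : (1:WithTop ℕ∞) + 1 ≤ 2)).differentiable one_ne_zero
  set c : ℝ → Euc n := fun t => p + t • w with hcdef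
  have hc : ∀ t : ℝ, HasDerivAt c w t := fun t => by
    rw [hcdef]; simpa using ((hasDerivAt_id t).smul_const w).const_add p
  set g : ℝ → ℝ := fun t => fderiv ℝ H (c t) w with hgdef
  have hφ : ∀ t : ℝ, HasDerivAt (fun s => H (c s)) (g t) t := fun t =>
    (hHd (c t)).hasFDerivAt.comp_hasDerivAt t (hc t)
  have hg : ∀ t : ℝ, HasDerivAt g (fderiv ℝ (fderiv ℝ H) (c t) w w) t := by
    intro t
    have h1 : HasDerivAt (fun s => fderiv ℝ H (c s)) (fderiv ℝ (fderiv ℝ H) (c t) w) t :=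
      (hGd (c t)).hasFDerivAt.comp_hasDerivAt t (hc t)
    simpa using h1.clm_apply (hasDerivAt_const t w)
  have hgmono : Monotone g := by
    apply monotone_of_deriv_nonneg (fun t => (hg t).differentiableAt)
    intro t
    rw [(hg t).deriv]
    exact hessian_nonneg hHconv (c t) w
  have hccont : ContinuousOn (fun t => H (c t)) (Set.Icc (0:ℝ) 1) :=
    (hHd.continuous.comp (continuous_const.add (continuous_id.smul continuous_const))).continuousOn
  obtain ⟨s, hs, hval⟩ := exists_hasDerivAt_eq_slope (fun t => H (c t)) g one_pos
    hccont (fun x _ => hφ x)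
  have h0 : g 0 ≤ g s := hgmono hs.1.le
  have hc0 : c 0 = p := by simp [hcdef]
  have hc1 : c 1 = p + w := by simp [hcdef]
  rw [hc1, hc0, sub_zero, div_one] at hval
  have hg0 : g 0 = fderiv ℝ H p w := by rw [hgdef]; simp [hc0]
  linarith [hval ▸ h0, hg0 ▸ h0]



lemma inner_grad (f : Euc n → ℝ) (p v : Euc n) : ⟪gradient f p, v⟫ = fderiv ℝ f p v := by
  rw [gradient, InnerProductSpace.toDual_symm_apply]

lemma legendre_at_grad (hH : ContDiff ℝ 2 H) (hHconv : PosDefHessian H)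
    (hs : Superlinear H) (p : Euc n) :
    legendre H (gradient H p) = ⟪gradient H p, p⟫ - H p := by
  have hHc : Continuous H := hH.continuous
  have key : ∀ p' : Euc n, ⟪gradient H p, p'⟫ - H p' ≤ ⟪gradient H p, p⟫ - H p := by
    intro p'
    have h1 := H_grad_ineq hH hHconv p (p' - p)
    rw [add_sub_cancel] at h1
    have h2 : fderiv ℝ H p (p' - p) = ⟪gradient H p, p'⟫ - ⟪gradient H p, p⟫ := by
      rw [← inner_grad H p (p' - p), inner_sub_right]
    linarith
  exact le_antisymm (ciSup_le key) (le_legendre hHc hs _ p)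

lemma subgrad_legendre (hH : ContDiff ℝ 2 H) (hHconv : PosDefHessian H)
    (hs : Superlinear H) {q p : Euc n}
    (hsub : ∀ h : Euc n, legendre H q + ⟪p, h⟫ ≤ legendre H (q + h)) :
    gradient H p = q ∧ legendre H q = ⟪q, p⟫ - H p := by
  have hHc : Continuous H := hH.continuous
  have hHd : Differentiable ℝ H := hH.differentiable (by norm_num)
  have step1 : ∀ q' : Euc n, ⟪q', p⟫ - legendre H q' ≤ ⟪q, p⟫ - legendre H q := by
    intro q'
    have h1 := hsub (q' - q)
    rw [add_sub_cancel] at h1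
    have hi : ⟪p, q' - q⟫ = ⟪q', p⟫ - ⟪q, p⟫ := by
      rw [inner_sub_right, real_inner_comm p q', real_inner_comm p q]
    linarith
  have step2 : H p ≤ ⟪q, p⟫ - legendre H q := by
    have h1 := step1 (gradient H p)
    rw [legendre_at_grad hH hHconv hs p] at h1
    linarith
  have step3 : legendre H q = ⟪q, p⟫ - H p :=
    le_antisymm (by linarith) (le_legendre hHc hs q p)
  have hmax : IsLocalMax (fun p' : Euc n => ⟪q, p'⟫ - H p') p := by
    apply IsMaxOn.isLocalMax (s := Set.univ) _ Filter.univ_mem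
    intro p' _
    have := le_legendre hHc hs q p'
    simp only [Set.mem_setOf_eq]
    rw [← step3]
    exact this
  have hfd : HasFDerivAt (fun p' : Euc n => ⟪q, p'⟫ - H p')
      (innerSL ℝ q - fderiv ℝ H p) p := ((innerSL ℝ q).hasFDerivAt).sub (hHd p).hasFDerivAt
  have hzero := hmax.hasFDerivAt_eq_zero hfd
  have hq : gradient H p = q := by
    apply ext_inner_right (𝕜 := ℝ)
    intro v
    have h1 : (innerSL ℝ q - fderiv ℝ H p) v = 0 := by rw [hzero]; rfl
    rw [ContinuousLinearMap.sub_apply, innerSL_apply_apply] at h1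
    rw [inner_grad]
    linarith
  exact ⟨hq, step3⟩




/-- `L` admits affine lower bounds of every nonneg slope. -/
def LB (L : Euc n → ℝ) : Prop := ∀ M : ℝ, 0 ≤ M → ∃ C : ℝ, ∀ q : Euc n, M * ‖q‖ - C ≤ L q

lemma norm_inv_smul (hT : 0 < T) (v : Euc n) : ‖T⁻¹ • v‖ = T⁻¹ * ‖v‖ := by
  rw [norm_smul, Real.norm_eq_abs, abs_of_pos (inv_pos.mpr hT)]

lemma lip_bound (hg : LipschitzWith K g) (x y : Euc n) : g x - K * ‖x - y‖ ≤ g y := by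
  have h := hg.dist_le_mul x y
  rw [Real.dist_eq, dist_eq_norm] at h
  have := (abs_le.mp h).2
  linarith

lemma splus_term_lb (hT : 0 < T) (hLlb : LB L) (hg : LipschitzWith K g) :
    ∃ C : ℝ, ∀ x y : Euc n, g x + ‖x - y‖ - C ≤ g y + T * L (T⁻¹ • (x - y)) := by
  obtain ⟨C, hC⟩ := hLlb ((K : ℝ) + 1) (by positivity)
  refine ⟨T * C, fun x y => ?_⟩
  have h1 := hC (T⁻¹ • (x - y))
  rw [norm_inv_smul hT] at h1
  have h2 : ((K : ℝ) + 1) * ‖x - y‖ - T * C ≤ T * L (T⁻¹ • (x - y)) := by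
    have h3 := mul_le_mul_of_nonneg_left h1 hT.le
    have h4 : T * (((K:ℝ) + 1) * (T⁻¹ * ‖x - y‖)) = ((K:ℝ) + 1) * ‖x - y‖ := by
      field_simp
    nlinarith
  have h5 := lip_bound hg x y
  nlinarith

lemma splus_bddBelow (hT : 0 < T) (hLlb : LB L) (hg : LipschitzWith K g) (x : Euc n) :
    BddBelow (Set.range fun y : Euc n => g y + T * L (T⁻¹ • (x - y))) := by
  obtain ⟨C, hC⟩ := splus_term_lb hT hLlb hg
  refine ⟨g x - C, ?_⟩
  rintro v ⟨y, rfl⟩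
  have := hC x y
  have := norm_nonneg (x - y)
  linarith

lemma splus_le (hT : 0 < T) (hLlb : LB L) (hg : LipschitzWith K g) (x y : Euc n) :
    Splus T L g x ≤ g y + T * L (T⁻¹ • (x - y)) :=
  ciInf_le (splus_bddBelow hT hLlb hg x) y

lemma splus_exists_min (hT : 0 < T) (hLc : Continuous L) (hLlb : LB L)
    (hg : LipschitzWith K g) (x : Euc n) :
    ∃ y0 : Euc n, (∀ y : Euc n, g y0 + T * L (T⁻¹ • (x - y0)) ≤ g y + T * L (T⁻¹ • (x - y))) ∧
      Splus T L g x = g y0 + T * L (T⁻¹ • (x - y0)) := by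
  set f : Euc n → ℝ := fun y => g y + T * L (T⁻¹ • (x - y)) with hfdef
  have hfc : Continuous f := by
    apply hg.continuous.add
    exact continuous_const.mul (hLc.comp (by fun_prop))
  obtain ⟨C, hC⟩ := splus_term_lb hT hLlb hg
  set R : ℝ := |C| + T * |L 0| + 1 with hRdef
  have hfx : f x = g x + T * L 0 := by simp [hfdef]
  have hRpos : 0 ≤ R := by positivity
  obtain ⟨y0, hy0mem, hy0min⟩ := (isCompact_closedBall x R).exists_isMinOn
    ⟨x, by simp [Metric.mem_closedBall, hRpos]⟩ hfc.continuousOn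
  have hglobal : ∀ y : Euc n, f y0 ≤ f y := by
    intro y
    rcases le_or_gt (dist y x) R with hy | hy
    · exact hy0min (by simpa [Metric.mem_closedBall] using hy)
    · have h1 : g x + ‖x - y‖ - C ≤ f y := hC x y
      have h2 : ‖x - y‖ > R := by rwa [dist_eq_norm, ← norm_sub_rev] at hy
      have h3 : f y0 ≤ f x := hy0min (by simp [Metric.mem_closedBall, hRpos])
      have h4 : T * L 0 ≤ T * |L 0| := mul_le_mul_of_nonneg_left (le_abs_self _) hT.le
      have h5 : C ≤ |C| := le_abs_self C
      rw [hfx] at h3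
      linarith
  exact ⟨y0, hglobal, le_antisymm (ciInf_le (splus_bddBelow hT hLlb hg x) y0)
    (le_ciInf hglobal)⟩

lemma splus_lipschitz (hT : 0 < T) (hLlb : LB L) (hg : LipschitzWith K g) :
    LipschitzWith K (Splus T L g) := by
  have key : ∀ x x' : Euc n, Splus T L g x ≤ Splus T L g x' + K * ‖x - x'‖ := by
    intro x x'
    have h1 : ∀ y : Euc n, Splus T L g x - (K : ℝ) * ‖x - x'‖ ≤
        g y + T * L (T⁻¹ • (x' - y)) := by
      intro y
      have h2 := splus_le hT hLlb hg x (y + (x - x'))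
      have h3 : x - (y + (x - x')) = x' - y := by abel
      rw [h3] at h2
      have h4 : g (y + (x - x')) - (K:ℝ) * ‖x - x'‖ ≤ g y := by
        have := lip_bound hg (y + (x - x')) y
        have h5 : (y + (x - x')) - y = x - x' := by abel
        rw [h5] at this
        linarith
      linarith
    have := le_ciInf h1
    have h6 : Splus T L g x' = ⨅ y : Euc n, (g y + T * L (T⁻¹ • (x' - y))) := rfl
    rw [← h6] at this
    linarith
  apply LipschitzWith.of_dist_le_mul
  intro x x'
  rw [Real.dist_eq, dist_eq_norm]
  rw [abs_sub_le_iff]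
  constructor
  · linarith [key x x']
  · have := key x' x
    rw [norm_sub_rev] at this
    linarith

lemma sminus_term_ub (hT : 0 < T) (hLlb : LB L) (hg : LipschitzWith K g) :
    ∃ C : ℝ, ∀ x y : Euc n, g y - T * L (T⁻¹ • (y - x)) ≤ g x - ‖y - x‖ + C := by
  obtain ⟨C, hC⟩ := hLlb ((K : ℝ) + 1) (by positivity)
  refine ⟨T * C, fun x y => ?_⟩
  have h1 := hC (T⁻¹ • (y - x))
  rw [norm_inv_smul hT] at h1
  have h3 := mul_le_mul_of_nonneg_left h1 hT.le
  have h4 : T * (((K:ℝ) + 1) * (T⁻¹ * ‖y - x‖)) = ((K:ℝ) + 1) * ‖y - x‖ := by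
    field_simp
  have h5 := lip_bound hg y x
  nlinarith

lemma sminus_bddAbove (hT : 0 < T) (hLlb : LB L) (hg : LipschitzWith K g) (x : Euc n) :
    BddAbove (Set.range fun y : Euc n => g y - T * L (T⁻¹ • (y - x))) := by
  obtain ⟨C, hC⟩ := sminus_term_ub hT hLlb hg
  refine ⟨g x + C, ?_⟩
  rintro v ⟨y, rfl⟩
  have := hC x y
  have := norm_nonneg (y - x)
  linarith

lemma le_sminus (hT : 0 < T) (hLlb : LB L) (hg : LipschitzWith K g) (x y : Euc n) :
    g y - T * L (T⁻¹ • (y - x)) ≤ Sminus T L g x :=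
  le_ciSup (sminus_bddAbove hT hLlb hg x) y

lemma sminus_lipschitz (hT : 0 < T) (hLlb : LB L) (hg : LipschitzWith K g) :
    LipschitzWith K (Sminus T L g) := by
  have key : ∀ x x' : Euc n, Sminus T L g x ≤ Sminus T L g x' + K * ‖x - x'‖ := by
    intro x x'
    apply ciSup_le
    intro y
    have h2 := le_sminus hT hLlb hg x' (y + (x' - x))
    have h3 : (y + (x' - x)) - x' = y - x := by abel
    rw [h3] at h2
    have h4 : g y - (K:ℝ) * ‖x - x'‖ ≤ g (y + (x' - x)) := by
      have := lip_bound hg y (y + (x' - x))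
      have h5 : y - (y + (x' - x)) = x - x' := by abel
      rw [h5] at this
      linarith
    linarith
  apply LipschitzWith.of_dist_le_mul
  intro x x'
  rw [Real.dist_eq, dist_eq_norm, abs_sub_le_iff]
  constructor
  · linarith [key x x']
  · have := key x' x
    rw [norm_sub_rev] at this
    linarith

lemma splus_mono (hT : 0 < T) (hLlb : LB L) {g1 g2 : Euc n → ℝ} {K1 : NNReal}
    (hg1 : LipschitzWith K1 g1) (h : ∀ x, g1 x ≤ g2 x) (x : Euc n) :
    Splus T L g1 x ≤ Splus T L g2 x :=
  ciInf_mono (splus_bddBelow hT hLlb hg1 x) (fun y => by have := h y; linarith)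

/-- `S⁺ S⁻ ≥ id`. -/
lemma le_splus_sminus (hT : 0 < T) (hLlb : LB L) (hg : LipschitzWith K g) (x : Euc n) :
    g x ≤ Splus T L (Sminus T L g) x := by
  apply le_ciInf
  intro y
  have h1 := le_sminus hT hLlb hg y x
  linarith

/-- `S⁻ S⁺ ≤ id`. -/
lemma sminus_splus_le (hT : 0 < T) (hLlb : LB L) (hg : LipschitzWith K g) (x : Euc n) :
    Sminus T L (Splus T L g) x ≤ g x := by
  apply ciSup_le
  intro y
  have h1 := splus_le hT hLlb hg y x
  linarith



lemma legendre_LB (hHc : Continuous H) (hs : Superlinear H) : LB (legendre H) :=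
  fun M hM => legendre_lb hHc hs M hM

/-- Core calibration lemma: at a point of differentiability of `uT = S⁺ v0`, the value
is achieved through the point `z - T∇H(∇uT z)`. -/
lemma calibration (hT : 0 < T) (hH : ContDiff ℝ 2 H) (hHconv : PosDefHessian H)
    (hs : Superlinear H) {v0 uT : Euc n → ℝ} (hv0 : LipschitzWith K v0)
    (heq : ∀ x, Splus T (legendre H) v0 x = uT x)
    {z p : Euc n} (hp : HasGradientAt uT p z) :
    uT z = v0 (z - T • gradient H p) + T * legendre H (gradient H p) := by
  have hHc : Continuous H := hH.continuous
  set L : Euc n → ℝ := legendre H with hLdef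
  have hLlb : LB L := legendre_LB hHc hs
  have hLc : Continuous L := legendre_continuous hHc hs
  have hLconv : ConvexOn ℝ Set.univ L := legendre_convexOn hHc hs
  obtain ⟨y0, hy0min, hy0eq⟩ := splus_exists_min hT hLc hLlb hv0 z
  set q : Euc n := T⁻¹ • (z - y0) with hqdef
  have huTz : uT z = v0 y0 + T * L q := by rw [← heq z, hy0eq]
  have hsub : ∀ h : Euc n, L q + ⟪p, h⟫ ≤ L (q + h) := by
    intro h
    have key : ∀ t : ℝ, t ∈ Set.Ioc (0:ℝ) 1 →
        (uT (z + t • (T • h)) - uT z) / t ≤ T * (L (q + h) - L q) := by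
      intro t ht
      have h1 : uT (z + t • (T • h)) ≤ v0 y0 + T * L (T⁻¹ • (z + t • (T • h) - y0)) := by
        rw [← heq _]; exact splus_le hT hLlb hv0 _ y0
      have h2 : T⁻¹ • (z + t • (T • h) - y0) = q + t • h := by
        have e1 : z + t • (T • h) - y0 = (z - y0) + (t * T) • h := by
          rw [smul_smul]; abel
        have e2 : T⁻¹ * (t * T) = t := by field_simp
        rw [e1, smul_add, smul_smul, e2, hqdef]
      rw [h2] at h1
      have h3 : L (q + t • h) ≤ (1 - t) * L q + t * L (q + h) := by
        have e3 : (1 - t) • q + t • (q + h) = q + t • h := by module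
        have := hLconv.2 (Set.mem_univ q) (Set.mem_univ (q + h))
          (by linarith [ht.2] : (0:ℝ) ≤ 1 - t) ht.1.le (by ring)
        rw [e3] at this
        simpa [smul_eq_mul] using this
      rw [div_le_iff₀ ht.1]
      have h4 : T * ((1 - t) * L q + t * L (q + h)) - T * L q = T * (L (q + h) - L q) * t := by
        ring
      nlinarith [mul_le_mul_of_nonneg_left h3 hT.le]
    have hline : HasDerivAt (fun t : ℝ => z + t • (T • h)) (T • h) 0 := by
      simpa using ((hasDerivAt_id (0:ℝ)).smul_const (T • h)).const_add z
    have hz0 : z + (0:ℝ) • (T • h) = z := by simp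
    have hfd : HasFDerivAt uT ((InnerProductSpace.toDual ℝ (Euc n)) p)
        (z + (0:ℝ) • (T • h)) := by rw [hz0]; exact hp.hasFDerivAt
    have hder0 := hfd.comp_hasDerivAt (0:ℝ) hline
    have hder : HasDerivAt (fun t : ℝ => uT (z + t • (T • h))) ⟪p, T • h⟫ 0 := by
      rwa [InnerProductSpace.toDual_apply_apply] at hder0
    have htend : Tendsto (slope (fun t : ℝ => uT (z + t • (T • h))) 0) (𝓝[>] 0)
        (𝓝 ⟪p, T • h⟫) :=
      (hasDerivAt_iff_tendsto_slope.mp hder).mono_left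
        (nhdsWithin_mono 0 (fun t ht => by simpa using ne_of_gt ht))
    have hle : ⟪p, T • h⟫ ≤ T * (L (q + h) - L q) := by
      apply le_of_tendsto htend
      filter_upwards [Ioc_mem_nhdsGT_of_mem (Set.mem_Ico.mpr ⟨le_refl 0, zero_lt_one⟩)] with t ht
      rw [slope_def_field]
      have := key t ht
      simpa [hz0] using this
    rw [real_inner_smul_right] at hle
    have := (mul_le_mul_iff_right₀ hT).mp hle
    linarith
  obtain ⟨hgrad, _⟩ := subgrad_legendre hH hHconv hs hsub
  have hy0 : z - T • gradient H p = y0 := by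
    rw [hgrad, hqdef, smul_smul, mul_inv_cancel₀ hT.ne', one_smul]
    abel
  rw [hy0, hgrad]
  exact huTz

lemma sminus_value (hT : 0 < T) (hH : ContDiff ℝ 2 H) (hHconv : PosDefHessian H)
    (hs : Superlinear H) {v0 uT : Euc n → ℝ} {K' : NNReal}
    (hv0 : LipschitzWith K v0) (huT : LipschitzWith K' uT)
    (heq : ∀ x, Splus T (legendre H) v0 x = uT x)
    {z p : Euc n} (hp : HasGradientAt uT p z) :
    Sminus T (legendre H) uT (z - T • gradient H p)
      = uT z - T * legendre H (gradient H p) := by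
  have hHc : Continuous H := hH.continuous
  set L : Euc n → ℝ := legendre H with hLdef
  have hLlb : LB L := legendre_LB hHc hs
  set y0 : Euc n := z - T • gradient H p with hy0def
  have hcal := calibration hT hH hHconv hs hv0 heq hp
  have hq : T⁻¹ • (z - y0) = gradient H p := by
    rw [hy0def]
    have : z - (z - T • gradient H p) = T • gradient H p := by abel
    rw [this, smul_smul, inv_mul_cancel₀ hT.ne', one_smul]
  apply le_antisymm
  · apply ciSup_le
    intro w
    have h1 : uT w ≤ v0 y0 + T * L (T⁻¹ • (w - y0)) := by
      rw [← heq w]; exact splus_le hT hLlb hv0 w y0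
    have h2 : v0 y0 = uT z - T * L (gradient H p) := by rw [hcal]; ring
    linarith
  · have h2 := le_sminus hT hLlb huT y0 z
    rw [hq] at h2
    exact h2


end Aux

open Aux MeasureTheory

lemma inv_smul_sub_smul {n : ℕ} {T : ℝ} (hT : 0 < T) (z w : Euc n) :
    T⁻¹ • (z - (z - T • w)) = w := by
  have h1 : z - (z - T • w) = T • w := by abel
  rw [h1, smul_smul, inv_mul_cancel₀ hT.ne', one_smul]

/-- If `u_T` is reachable and `ũ0 := S_T^- u_T`, then a Lipschitz `u0`
satisfies `S_T^+ u0 = u_T` iff `u0 ≥ ũ0` everywhere and `u0 = ũ0` on `X_T(u_T)`. -/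
theorem initial_data_characterization
    {n : ℕ} (hn : 0 < n) (T : ℝ) (hT : 0 < T)
    (H : Euc n → ℝ) (hH : ContDiff ℝ 2 H)
    (hHconv : PosDefHessian H) (hHsuper : Superlinear H)
    (uT : Euc n → ℝ) (huT : IsLip uT)
    (hreach : ∃ u0 : Euc n → ℝ, IsLip u0 ∧ Splus T (legendre H) u0 = uT)
    (u0 : Euc n → ℝ) (hu0 : IsLip u0) :
    Splus T (legendre H) u0 = uT ↔
      ((∀ x : Euc n, Sminus T (legendre H) uT x ≤ u0 x) ∧
        ∀ x ∈ XT T H uT, u0 x = Sminus T (legendre H) uT x) := by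
  obtain ⟨KT, hKT⟩ := huT
  obtain ⟨K0, hK0⟩ := hu0
  obtain ⟨v0, ⟨Kv, hKv⟩, hveq⟩ := hreach
  have hHc : Continuous H := hH.continuous
  have hLlb : LB (legendre H) := legendre_LB hHc hHsuper
  have heqv : ∀ x, Splus T (legendre H) v0 x = uT x := fun x => congrFun hveq x
  constructor
  · intro h
    constructor
    · intro x
      have h1 := sminus_splus_le hT hLlb hK0 x
      rwa [h] at h1
    · intro x hx
      obtain ⟨z, hz, hxe⟩ := hx
      have hp : HasGradientAt uT (gradient uT z) z := hz.hasGradientAt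
      have heq0 : ∀ y, Splus T (legendre H) u0 y = uT y := fun y => congrFun h y
      have hcal := calibration hT hH hHconv hHsuper hK0 heq0 hp
      have hsv := sminus_value hT hH hHconv hHsuper hK0 hKT heq0 hp
      rw [hxe, hsv]
      linarith
  · rintro ⟨h1, h2⟩
    have hmlip : LipschitzWith KT (Sminus T (legendre H) uT) := sminus_lipschitz hT hLlb hKT
    funext x
    apply le_antisymm
    · -- upper bound via density of differentiability points
      have hD : ∀ z : Euc n, DifferentiableAt ℝ uT z → Splus T (legendre H) u0 z ≤ uT z := by
        intro z hz
        have hp : HasGradientAt uT (gradient uT z) z := hz.hasGradientAt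
        set p : Euc n := gradient uT z with hpdef
        set y0 : Euc n := z - T • gradient H p with hy0def
        have hy0X : y0 ∈ XT T H uT := ⟨z, hz, rfl⟩
        have hsv := sminus_value hT hH hHconv hHsuper hKv hKT heqv hp
        have hu0y0 : u0 y0 = uT z - T * legendre H (gradient H p) := by
          rw [h2 y0 hy0X, hy0def, hsv]
        have hle := splus_le hT hLlb hK0 z y0
        rw [hy0def, inv_smul_sub_smul hT z (gradient H p)] at hle
        rw [← hy0def] at hle
        rw [hu0y0] at hle
        linarith
      have hdense : Dense {z : Euc n | DifferentiableAt ℝ uT z} :=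
        MeasureTheory.Measure.dense_of_ae (μ := volume) hKT.ae_differentiableAt
      have hclosed : IsClosed {z : Euc n | Splus T (legendre H) u0 z ≤ uT z} :=
        isClosed_le (splus_lipschitz hT hLlb hK0).continuous hKT.continuous
      have hsub : {z : Euc n | DifferentiableAt ℝ uT z}
          ⊆ {z : Euc n | Splus T (legendre H) u0 z ≤ uT z} := fun z hz => hD z hz
      have hx : x ∈ closure {z : Euc n | DifferentiableAt ℝ uT z} := hdense x
      have := (closure_mono hsub) hx
      rwa [hclosed.closure_eq] at this
    · have ha := splus_mono hT hLlb hmlip h1 x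
      have hb := le_splus_sminus hT hLlb hKT x
      linarith

end
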